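/- Let z_n → z strongly in Y and suppose S : U → Y is weak-to-weak continuous. Then the functionals E^{z_n}(u) = (1/2)‖S(u) − z_n‖_Y² + ∫_Ω g(u(x)) dx Γ-converge to E^z with respect to weak convergence in U; that is: (i) whenever u_n ⇀ u weakly in U, liminf_{n→∞} E^{z_n}(u_n) ≥ E^z(u), and (ii) for every u ∈ U there is a sequence u_n ⇀ u with limsup_{n→∞} E^{z_n}(u_n) ≤ E^z(u). -/

import Mathlib

open MeasureTheory Set Filter Topology

noncomputable section

abbrev Vec (k : ℕ) := EuclideanSpace ℝ (Fin k)

/-- Weak convergence of a sequence in a real inner product space. -/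
def WeakTendsto {X : Type*} [NormedAddCommGroup X] [InnerProductSpace ℝ X]
    (u : ℕ → X) (l : X) : Prop :=
  ∀ w : X, Tendsto (fun i => (inner ℝ (u i) w : ℝ)) atTop (nhds (inner ℝ l w : ℝ))

/-- Convexity for extended-real-valued functions. -/
def EConvexOn {X : Type*} [AddCommGroup X] [Module ℝ X] (g : X → EReal) : Prop :=
  ∀ x y : X, ∀ a b : ℝ, 0 ≤ a → 0 ≤ b → a + b = 1 →
    g (a • x + b • y) ≤ (a : EReal) * g x + (b : EReal) * g y

/-- Properness for extended-real-valued functions. -/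
def EProper {X : Type*} (g : X → EReal) : Prop :=
  (∃ v, g v ≠ ⊤) ∧ ∀ v, g v ≠ ⊥

open Classical in
/-- The integral functional `u ↦ ∫ g(u x) dμ`, valued in `EReal`. -/
def intG {α : Type*} [MeasurableSpace α] (μ : Measure α) {k : ℕ} (g : Vec k → EReal)
    (u : α → Vec k) : EReal :=
  if (∀ᵐ x ∂μ, g (u x) ≠ ⊤) ∧ Integrable (fun x => (g (u x)).toReal) μ
  then (((∫ x, (g (u x)).toReal ∂μ : ℝ) : EReal)) else ⊤

/-- The Tikhonov-type energy `u ↦ ½‖S u − z‖² + ∫ g(u x) dμ`. -/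
def energy {α : Type*} [MeasurableSpace α] (μ : Measure α) {k : ℕ} {Y : Type*}
    [NormedAddCommGroup Y]
    (S : Lp (Vec k) 2 μ → Y) (z : Y) (g : Vec k → EReal) (u : Lp (Vec k) 2 μ) : EReal :=
  (((1/2 : ℝ) * ‖S u - z‖^2 : ℝ) : EReal) + intG μ g (fun x => u x)

/-- The convex subdifferential of an extended-real-valued function on a real inner
product space. -/
def ESubdiff {X : Type*} [NormedAddCommGroup X] [InnerProductSpace ℝ X]
    (f : X → EReal) (u : X) : Set X :=
  {p | ∀ v, f u + ((inner ℝ p (v - u) : ℝ) : EReal) ≤ f v}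

/-- The Fenchel (Legendre–Fenchel) conjugate of an extended-real-valued function on a
real inner product space. -/
def EConj {X : Type*} [NormedAddCommGroup X] [InnerProductSpace ℝ X]
    (f : X → EReal) (p : X) : EReal :=
  ⨆ v, ((inner ℝ p v : ℝ) : EReal) - f v

/-- Mazur-type lemma: a closed convex set contains the weak limit of any sequence
frequently belonging to it. -/
theorem weak_mem_of_closed_convex {X : Type*} [NormedAddCommGroup X]
    [InnerProductSpace ℝ X] [CompleteSpace X] {K : Set X} (hKconv : Convex ℝ K)
    (hcl : IsClosed K) {u : ℕ → X} {l : X}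
    (hu : ∀ w : X, Tendsto (fun i => (inner ℝ (u i) w : ℝ)) atTop (nhds (inner ℝ l w : ℝ)))
    (hfreq : ∃ᶠ i in atTop, u i ∈ K) : l ∈ K := by
  obtain ⟨i0, hi0⟩ := hfreq.exists
  obtain ⟨v, hvK, hv⟩ :=
    exists_norm_eq_iInf_of_complete_convex ⟨u i0, hi0⟩ hcl.isComplete hKconv l
  rw [norm_eq_iInf_iff_real_inner_le_zero hKconv hvK] at hv
  have key : (inner ℝ l (l - v) : ℝ) ≤ inner ℝ v (l - v) := by
    by_contra hlt
    push_neg at hlt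
    have hev : ∀ᶠ i in atTop, (inner ℝ v (l - v) : ℝ) < inner ℝ (u i) (l - v) :=
      (hu (l - v)).eventually (eventually_gt_nhds hlt)
    obtain ⟨i, hiK, hilt⟩ := (hfreq.and_eventually hev).exists
    have h2 := hv (u i) hiK
    rw [inner_sub_right] at h2
    have e1 := real_inner_comm (l - v) (u i)
    have e2 := real_inner_comm (l - v) v
    linarith
  have h3 : (inner ℝ (l - v) (l - v) : ℝ) ≤ 0 := by
    rw [inner_sub_left]; linarith
  have h4 : l - v = 0 := by
    have := le_antisymm h3 real_inner_self_nonneg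
    exact inner_self_eq_zero.mp this
  have : l = v := by rwa [sub_eq_zero] at h4
  exact this ▸ hvK

theorem intG_le_coe_iff {α : Type*} [MeasurableSpace α] (μ : Measure α) {k : ℕ}
    (g : Vec k → EReal) (u : α → Vec k) (r : ℝ) :
    intG μ g u ≤ (r : EReal) ↔
      ((∀ᵐ x ∂μ, g (u x) ≠ ⊤) ∧ Integrable (fun x => (g (u x)).toReal) μ) ∧
        (∫ x, (g (u x)).toReal ∂μ) ≤ r := by
  rw [intG]; split_ifs with h
  · simp [h, EReal.coe_le_coe_iff]
  · simp [h]

theorem intG_ne_bot {α : Type*} [MeasurableSpace α] (μ : Measure α) {k : ℕ}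
    (g : Vec k → EReal) (u : α → Vec k) : intG μ g u ≠ ⊥ := by
  rw [intG]; split_ifs <;> simp

theorem convex_K {α : Type*} [MeasurableSpace α] {μ : Measure α} [IsFiniteMeasure μ] {k : ℕ}
    {g : Vec k → EReal} (hgm : Measurable g) (hconv : EConvexOn g) (hbot : ∀ v, g v ≠ ⊥)
    {c : ℝ} (hc : ∀ v, (c : EReal) ≤ g v) (r : ℝ) :
    Convex ℝ {u : Lp (Vec k) 2 μ | intG μ g (fun x => u x) ≤ (r : EReal)} := by
  intro u hu v hv a b ha hb hab
  rw [mem_setOf_eq, intG_le_coe_iff] at hu hv ⊢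
  obtain ⟨⟨hPu, hIu⟩, hintu⟩ := hu
  obtain ⟨⟨hPv, hIv⟩, hintv⟩ := hv
  have hw : ∀ᵐ x ∂μ, (↑(a • u + b • v) : α → Vec k) x
      = a • (u : α → Vec k) x + b • (v : α → Vec k) x := by
    filter_upwards [Lp.coeFn_add (a • u) (b • v), Lp.coeFn_smul a u, Lp.coeFn_smul b v]
      with x h1 h2 h3
    rw [h1]; simp [h2, h3]
  have key : ∀ᵐ x ∂μ, g ((↑(a • u + b • v) : α → Vec k) x) ≠ ⊤ ∧
      ((g ((↑(a • u + b • v) : α → Vec k) x)).toReal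
        ≤ a * (g (u x)).toReal + b * (g (v x)).toReal) ∧
      c ≤ (g ((↑(a • u + b • v) : α → Vec k) x)).toReal := by
    filter_upwards [hw, hPu, hPv] with x hwx hux hvx
    have gur : g (u x) = (((g (u x)).toReal : ℝ) : EReal) := (EReal.coe_toReal hux (hbot _)).symm
    have gvr : g (v x) = (((g (v x)).toReal : ℝ) : EReal) := (EReal.coe_toReal hvx (hbot _)).symm
    have h1 : g ((↑(a • u + b • v) : α → Vec k) x)
        ≤ ((a * (g (u x)).toReal + b * (g (v x)).toReal : ℝ) : EReal) := by
      rw [hwx]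
      refine le_trans (hconv _ _ a b ha hb hab) ?_
      rw [EReal.coe_add, EReal.coe_mul, EReal.coe_mul]
      exact add_le_add (by rw [← gur]) (by rw [← gvr])
    have hne : g ((↑(a • u + b • v) : α → Vec k) x) ≠ ⊤ :=
      ne_top_of_le_ne_top (EReal.coe_ne_top _) h1
    refine ⟨hne, ?_, ?_⟩
    · have := EReal.toReal_le_toReal h1 (hbot _) (EReal.coe_ne_top _)
      rwa [EReal.toReal_coe] at this
    · have := EReal.toReal_le_toReal (hc ((↑(a • u + b • v) : α → Vec k) x))
        (EReal.coe_ne_bot c) hne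
      simpa using this
  have hmw : AEStronglyMeasurable
      (fun x => (g ((↑(a • u + b • v) : α → Vec k) x)).toReal) μ :=
    ((measurable_ereal_toReal.comp hgm).comp_aemeasurable
      (Lp.aestronglyMeasurable _).aemeasurable).aestronglyMeasurable
  have hIw : Integrable (fun x => (g ((↑(a • u + b • v) : α → Vec k) x)).toReal) μ := by
    refine Integrable.mono'
      (((hIu.abs.const_mul a).add (hIv.abs.const_mul b)).add (integrable_const |c|)) hmw ?_
    filter_upwards [key] with x hx
    obtain ⟨h1, h2, h3⟩ := hx
    simp only [Pi.add_apply]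
    rw [Real.norm_eq_abs, abs_le]
    constructor
    · nlinarith [le_abs_self ((g (u x)).toReal), le_abs_self ((g (v x)).toReal),
        abs_nonneg ((g (u x)).toReal), abs_nonneg ((g (v x)).toReal),
        neg_abs_le c, abs_nonneg c]
    · nlinarith [le_abs_self ((g (u x)).toReal), le_abs_self ((g (v x)).toReal),
        abs_nonneg ((g (u x)).toReal), abs_nonneg ((g (v x)).toReal),
        neg_abs_le c, abs_nonneg c]
  refine ⟨⟨key.mono fun x hx => hx.1, hIw⟩, ?_⟩
  calc ∫ x, (g ((↑(a • u + b • v) : α → Vec k) x)).toReal ∂μ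
      ≤ ∫ x, (a * (g (u x)).toReal + b * (g (v x)).toReal) ∂μ :=
        integral_mono_ae hIw ((hIu.const_mul a).add (hIv.const_mul b))
          (key.mono fun x hx => hx.2.1)
    _ = a * ∫ x, (g (u x)).toReal ∂μ + b * ∫ x, (g (v x)).toReal ∂μ := by
        rw [integral_add (hIu.const_mul a) (hIv.const_mul b)]
        simp_rw [← smul_eq_mul, integral_smul]
    _ ≤ a * r + b * r :=
        add_le_add (mul_le_mul_of_nonneg_left hintu ha) (mul_le_mul_of_nonneg_left hintv hb)
    _ = r := by rw [← add_mul, hab, one_mul]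

set_option synthInstance.maxHeartbeats 1000000 in
set_option maxHeartbeats 1000000 in
theorem closed_K {α : Type*} [MeasurableSpace α] {μ : Measure α} [IsFiniteMeasure μ] {k : ℕ}
    {g : Vec k → EReal} (hgm : Measurable g) (hlsc : LowerSemicontinuous g)
    (hbot : ∀ v, g v ≠ ⊥) {s : Set (Vec k)} (hdom : {v | g v ≠ ⊤} = s) (hscl : IsClosed s)
    {c : ℝ} (hc : ∀ v, (c : EReal) ≤ g v) (r : ℝ) :
    IsClosed {u : Lp (Vec k) 2 μ | intG μ g (fun x => u x) ≤ (r : EReal)} := by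
  haveI fact2 : Fact ((1:ENNReal) ≤ 2) := ⟨one_le_two⟩
  refine IsSeqClosed.isClosed ?_
  intro U p hU hUp
  have hmeas : TendstoInMeasure μ (fun n => (U n : α → Vec k)) atTop (p : α → Vec k) :=
    tendstoInMeasure_of_tendsto_Lp hUp
  obtain ⟨ns, _hns, hae⟩ := hmeas.exists_seq_tendsto_ae
  simp only [mem_setOf_eq, intG_le_coe_iff] at hU ⊢
  set μt := (μ Set.univ).toReal with hμt
  have htoReal_ge : ∀ (v : Vec k), g v ≠ ⊤ → c ≤ (g v).toReal := by
    intro v hv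
    have := EReal.toReal_le_toReal (hc v) (EReal.coe_ne_bot c) hv
    simpa using this
  have hbnd : ∀ j, c * μt ≤ ∫ x, (g ((U (ns j) : α → Vec k) x)).toReal ∂μ := by
    intro j
    have h1 : ∀ᵐ x ∂μ, c ≤ (g ((U (ns j) : α → Vec k) x)).toReal := by
      filter_upwards [(hU (ns j)).1.1] with x hx using htoReal_ge _ hx
    have := integral_mono_ae (integrable_const c) (hU (ns j)).1.2 h1
    rwa [integral_const, smul_eq_mul, mul_comm] at this
  have haeall : ∀ᵐ x ∂μ, (∀ j, g ((U (ns j) : α → Vec k) x) ≠ ⊤) ∧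
      Tendsto (fun j => (U (ns j) : α → Vec k) x) atTop (𝓝 ((p : α → Vec k) x)) :=
    ((ae_all_iff.2 fun j => (hU (ns j)).1.1).and hae)
  have hptwise : ∀ᵐ x ∂μ, g ((p : α → Vec k) x) ≠ ⊤ ∧
      ENNReal.ofReal ((g ((p : α → Vec k) x)).toReal - c) ≤
        liminf (fun j => ENNReal.ofReal ((g ((U (ns j) : α → Vec k) x)).toReal - c)) atTop := by
    filter_upwards [haeall] with x hx
    obtain ⟨hxt, hxconv⟩ := hx
    have hpx : (p : α → Vec k) x ∈ s := by
      refine hscl.mem_of_tendsto hxconv (Eventually.of_forall fun j => ?_)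
      rw [← hdom]; exact hxt j
    have hpt : g ((p : α → Vec k) x) ≠ ⊤ := by rw [← hdom] at hpx; exact hpx
    refine ⟨hpt, ?_⟩
    rw [le_liminf_iff]
    intro b hb
    have hbt : b ≠ ⊤ := ne_top_of_lt hb
    have hb' : b.toReal < (g ((p : α → Vec k) x)).toReal - c := by
      rwa [ENNReal.lt_ofReal_iff_toReal_lt hbt] at hb
    have hlt : ((b.toReal + c : ℝ) : EReal) < g ((p : α → Vec k) x) := by
      calc ((b.toReal + c : ℝ) : EReal) < (((g ((p : α → Vec k) x)).toReal : ℝ) : EReal) := by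
            exact_mod_cast (by linarith : b.toReal + c < (g ((p : α → Vec k) x)).toReal)
        _ = g ((p : α → Vec k) x) := EReal.coe_toReal hpt (hbot _)
    filter_upwards [hxconv.eventually (hlsc ((p : α → Vec k) x) _ hlt)] with j hj
    have hj' : b.toReal + c < (g ((U (ns j) : α → Vec k) x)).toReal := by
      rw [← EReal.coe_toReal (hxt j) (hbot _)] at hj
      exact_mod_cast hj
    calc b = ENNReal.ofReal b.toReal := (ENNReal.ofReal_toReal hbt).symm
      _ < ENNReal.ofReal ((g ((U (ns j) : α → Vec k) x)).toReal - c) := by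
          rw [ENNReal.ofReal_lt_ofReal_iff (by linarith [ENNReal.toReal_nonneg (a := b)])]
          linarith [ENNReal.toReal_nonneg (a := b)]
  have hFm : Measurable (fun v : Vec k => ENNReal.ofReal ((g v).toReal - c)) :=
    ENNReal.measurable_ofReal.comp ((measurable_ereal_toReal.comp hgm).sub measurable_const)
  have hfatou : ∫⁻ x, ENNReal.ofReal ((g ((p : α → Vec k) x)).toReal - c) ∂μ ≤
      ENNReal.ofReal (r - c * μt) := by
    have h1 : ∫⁻ x, ENNReal.ofReal ((g ((p : α → Vec k) x)).toReal - c) ∂μ ≤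
        ∫⁻ x, liminf (fun j => ENNReal.ofReal ((g ((U (ns j) : α → Vec k) x)).toReal - c)) atTop ∂μ :=
      lintegral_mono_ae (hptwise.mono fun x hx => hx.2)
    have h2 := lintegral_liminf_le' (u := atTop)
      (fun j => hFm.comp_aemeasurable (Lp.aestronglyMeasurable (U (ns j))).aemeasurable)
    have h3 : ∀ j, ∫⁻ x, ENNReal.ofReal ((g ((U (ns j) : α → Vec k) x)).toReal - c) ∂μ ≤
        ENNReal.ofReal (r - c * μt) := by
      intro j
      have hint : Integrable (fun x => (g ((U (ns j) : α → Vec k) x)).toReal - c) μ :=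
        (hU (ns j)).1.2.sub (integrable_const c)
      have hnn : 0 ≤ᵐ[μ] fun x => (g ((U (ns j) : α → Vec k) x)).toReal - c := by
        filter_upwards [(hU (ns j)).1.1] with x hx
        have := htoReal_ge _ hx; simp only [Pi.zero_apply]; linarith
      rw [← ofReal_integral_eq_lintegral_ofReal hint hnn]
      apply ENNReal.ofReal_le_ofReal
      rw [integral_sub (hU (ns j)).1.2 (integrable_const c), integral_const, smul_eq_mul]
      rw [show μ.real univ = μt from rfl]
      have := (hU (ns j)).2
      linarith
    refine h1.trans (h2.trans ?_)
    calc liminf (fun j => ∫⁻ x, ENNReal.ofReal ((g ((U (ns j) : α → Vec k) x)).toReal - c) ∂μ) atTop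
        ≤ liminf (fun _ : ℕ => ENNReal.ofReal (r - c * μt)) atTop :=
          liminf_le_liminf (Eventually.of_forall h3)
      _ = ENNReal.ofReal (r - c * μt) := liminf_const _
  have hPp : ∀ᵐ x ∂μ, g ((p : α → Vec k) x) ≠ ⊤ := hptwise.mono fun x hx => hx.1
  have hmp : AEStronglyMeasurable (fun x => (g ((p : α → Vec k) x)).toReal) μ :=
    ((measurable_ereal_toReal.comp hgm).comp_aemeasurable
      (Lp.aestronglyMeasurable p).aemeasurable).aestronglyMeasurable
  have hnnp : 0 ≤ᵐ[μ] fun x => (g ((p : α → Vec k) x)).toReal - c := by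
    filter_upwards [hPp] with x hx
    have := htoReal_ge _ hx; simp only [Pi.zero_apply]; linarith
  have hIp' : Integrable (fun x => (g ((p : α → Vec k) x)).toReal - c) μ := by
    refine ⟨hmp.sub aestronglyMeasurable_const, ?_⟩
    rw [hasFiniteIntegral_iff_ofReal hnnp]
    exact lt_of_le_of_lt hfatou ENNReal.ofReal_lt_top
  have hIp : Integrable (fun x => (g ((p : α → Vec k) x)).toReal) μ := by
    have h := hIp'.add (integrable_const c)
    have heq : ((fun x => ((g ((p : α → Vec k) x)).toReal - c)) + fun _ => c)
        = fun x => (g ((p : α → Vec k) x)).toReal := by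
      funext x; simp [Pi.add_apply]
    rwa [heq] at h
  refine ⟨⟨hPp, hIp⟩, ?_⟩
  have hr0 : 0 ≤ r - c * μt := by linarith [hbnd 0, (hU (ns 0)).2]
  have h5 : ∫ x, ((g ((p : α → Vec k) x)).toReal - c) ∂μ ≤ r - c * μt := by
    rw [integral_eq_lintegral_of_nonneg_ae hnnp (hmp.sub aestronglyMeasurable_const)]
    have h6 := ENNReal.toReal_mono ENNReal.ofReal_ne_top hfatou
    rwa [ENNReal.toReal_ofReal hr0] at h6
  rw [integral_sub hIp (integrable_const c), integral_const, smul_eq_mul] at h5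
  rw [show μ.real univ = μt from rfl] at h5
  linarith


set_option maxHeartbeats 1000000 in
/-- Γ-convergence of the objective under target perturbations:
if `z_n → z` strongly in `Y` and `S` is weak-to-weak continuous, then
`E^{z_n}` Γ-converges to `E^z` with respect to weak convergence in `U`. -/
theorem gamma_convergence_target_perturbation
    {n m : ℕ} (hm : 2 ≤ m)
    (Ω : Set (Vec n)) (hΩopen : IsOpen Ω) (hΩbdd : Bornology.IsBounded Ω)
    {Y : Type*} [NormedAddCommGroup Y] [InnerProductSpace ℝ Y] [CompleteSpace Y]
    (M : Finset (Vec m)) (g : Vec m → EReal)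
    (hproper : EProper g) (hconv : EConvexOn g) (hlsc : LowerSemicontinuous g)
    (hdom : {v | g v ≠ ⊤} = convexHull ℝ (M : Set (Vec m)))
    (S : Lp (Vec m) 2 (volume.restrict Ω) → Y)
    (hS : ∀ (u : ℕ → Lp (Vec m) 2 (volume.restrict Ω)) (l : Lp (Vec m) 2 (volume.restrict Ω)),
      WeakTendsto u l → WeakTendsto (fun i => S (u i)) (S l))
    (z : ℕ → Y) (zbar : Y) (hz : Tendsto (fun i => ‖z i - zbar‖) atTop (nhds (0:ℝ))) :
    -- (i) Γ-liminf inequality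
    (∀ (u : ℕ → Lp (Vec m) 2 (volume.restrict Ω)) (l), WeakTendsto u l →
        energy (volume.restrict Ω) S zbar g l ≤
          Filter.liminf (fun i => energy (volume.restrict Ω) S (z i) g (u i)) atTop)
    -- (ii) existence of recovery sequences
    ∧ (∀ l : Lp (Vec m) 2 (volume.restrict Ω), ∃ u : ℕ → Lp (Vec m) 2 (volume.restrict Ω),
        WeakTendsto u l ∧
        Filter.limsup (fun i => energy (volume.restrict Ω) S (z i) g (u i)) atTop ≤
          energy (volume.restrict Ω) S zbar g l) := by
  classical
  haveI hfin : IsFiniteMeasure (volume.restrict Ω) := ⟨by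
    rw [Measure.restrict_apply_univ]; exact hΩbdd.measure_lt_top⟩
  have hbot : ∀ v, g v ≠ ⊥ := hproper.2
  have hgm : Measurable g := hlsc.measurable
  have hMne : (convexHull ℝ (M : Set (Vec m))).Nonempty := by
    obtain ⟨v, hv⟩ := hproper.1
    exact ⟨v, by rw [← hdom]; exact hv⟩
  have hcpt : IsCompact (convexHull ℝ (M : Set (Vec m))) := M.finite_toSet.isCompact_convexHull ℝ
  obtain ⟨c, hc⟩ : ∃ c : ℝ, ∀ v, (c : EReal) ≤ g v := by
    have hcover : convexHull ℝ (M : Set (Vec m)) ⊆ ⋃ ρ : ℝ, {v | (ρ : EReal) < g v} := by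
      intro v _
      have h1 : (⊥ : EReal) < g v := bot_lt_iff_ne_bot.mpr (hbot v)
      obtain ⟨ρ, -, hρ2⟩ := EReal.exists_between_coe_real h1
      exact mem_iUnion.mpr ⟨ρ, hρ2⟩
    obtain ⟨t, ht⟩ := hcpt.elim_finite_subcover _
      (fun ρ : ℝ => hlsc.isOpen_preimage ρ) hcover
    have htne : t.Nonempty := by
      obtain ⟨v, hv⟩ := hMne
      obtain ⟨ρ, hρt, -⟩ := mem_iUnion₂.mp (ht hv)
      exact ⟨ρ, hρt⟩
    refine ⟨t.min' htne, fun v => ?_⟩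
    by_cases hv : v ∈ convexHull ℝ (M : Set (Vec m))
    · obtain ⟨ρ, hρt, hρv⟩ := mem_iUnion₂.mp (ht hv)
      exact le_trans (EReal.coe_le_coe_iff.mpr (t.min'_le ρ hρt)) (le_of_lt hρv)
    · have hvt : g v = ⊤ := by
        by_contra h
        exact hv (by rw [← hdom]; exact h)
      rw [hvt]; exact le_top
  have hzt : Tendsto z atTop (𝓝 zbar) := tendsto_iff_norm_sub_tendsto_zero.mpr hz
  constructor
  · -- (i) liminf inequality
    intro u l hwl
    set w := S l - zbar with hwdef
    set F : ℝ := (1/2 : ℝ) * ‖w‖^2 with hFdef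
    set d : ℕ → ℝ := fun i => (1/2 : ℝ) * ‖S (u i) - z i‖^2 with hddef
    set e : ℕ → ℝ := fun i => (inner ℝ w (S (u i) - z i) : ℝ) - (1/2 : ℝ) * ‖w‖^2 with hedef
    have he_le : ∀ i, e i ≤ d i := by
      intro i
      have h1 := real_inner_le_norm w (S (u i) - z i)
      simp only [hedef, hddef]
      nlinarith [sq_nonneg (‖w‖ - ‖S (u i) - z i‖), norm_nonneg w,
        norm_nonneg (S (u i) - z i)]
    have he_tendsto : Tendsto e atTop (𝓝 F) := by
      have hSw : Tendsto (fun i => (inner ℝ w (S (u i)) : ℝ)) atTop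
          (𝓝 (inner ℝ w (S l) : ℝ)) := by
        have h1 := hS u l hwl w
        have heq1 : (fun i => (inner ℝ w (S (u i)) : ℝ))
            = fun i => (inner ℝ (S (u i)) w : ℝ) := by
          funext i; exact real_inner_comm _ _
        rw [heq1, real_inner_comm (S l) w]
        exact h1
      have hzw : Tendsto (fun i => (inner ℝ w (z i) : ℝ)) atTop (𝓝 (inner ℝ w zbar : ℝ)) :=
        Filter.Tendsto.inner tendsto_const_nhds hzt
      have h2 : Tendsto (fun i => (inner ℝ w (S (u i)) : ℝ) - (inner ℝ w (z i) : ℝ)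
          - (1/2 : ℝ) * ‖w‖^2) atTop
          (𝓝 ((inner ℝ w (S l) : ℝ) - (inner ℝ w zbar : ℝ) - (1/2 : ℝ) * ‖w‖^2)) :=
        (hSw.sub hzw).sub tendsto_const_nhds
      have he_eq : e = fun i => (inner ℝ w (S (u i)) : ℝ) - (inner ℝ w (z i) : ℝ)
          - (1/2 : ℝ) * ‖w‖^2 := by
        funext i
        simp only [hedef, inner_sub_right]
        try ring
      have hF_eq : F = (inner ℝ w (S l) : ℝ) - (inner ℝ w zbar : ℝ) - (1/2 : ℝ) * ‖w‖^2 := by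
        have h3 : (inner ℝ w (S l) : ℝ) - (inner ℝ w zbar : ℝ) = ‖w‖^2 := by
          rw [← inner_sub_right, ← hwdef, real_inner_self_eq_norm_sq]
        rw [hFdef]
        try linarith
      rw [he_eq, hF_eq]
      exact h2
    have hA : ((F : ℝ) : EReal) ≤ liminf (fun i => ((d i : ℝ) : EReal)) atTop := by
      have h1 : liminf (fun i => ((e i : ℝ) : EReal)) atTop = ((F : ℝ) : EReal) :=
        (EReal.tendsto_coe.mpr he_tendsto).liminf_eq
      rw [← h1]
      exact liminf_le_liminf (Eventually.of_forall fun i => EReal.coe_le_coe_iff.mpr (he_le i))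
    have hB : intG (volume.restrict Ω) g (fun x => l x) ≤
        liminf (fun i => intG (volume.restrict Ω) g (fun x => (u i) x)) atTop := by
      by_contra hcon
      push_neg at hcon
      obtain ⟨ρ, hρ1, hρ2⟩ := EReal.exists_between_coe_real hcon
      have hfreq : ∃ᶠ i in atTop, intG (volume.restrict Ω) g (fun x => (u i) x) < (ρ : EReal) :=
        frequently_lt_of_liminf_lt (h := hρ1)
      have hfreq' : ∃ᶠ i in atTop,
          u i ∈ {q : Lp (Vec m) 2 (volume.restrict Ω) | intG (volume.restrict Ω) g (fun x => q x) ≤ (ρ : EReal)} :=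
        hfreq.mono fun i hi => le_of_lt hi
      have hlK := weak_mem_of_closed_convex
        (convex_K hgm hconv hbot hc ρ)
        (closed_K hgm hlsc hbot hdom hcpt.isClosed hc ρ) hwl hfreq'
      exact absurd (lt_of_le_of_lt hlK hρ2) (lt_irrefl _)
    calc energy (volume.restrict Ω) S zbar g l
        = ((F : ℝ) : EReal) + intG (volume.restrict Ω) g (fun x => l x) := by
          simp only [energy]
          try rw [hFdef, hwdef]
      _ ≤ liminf (fun i => ((d i : ℝ) : EReal)) atTop
          + liminf (fun i => intG (volume.restrict Ω) g (fun x => (u i) x)) atTop := add_le_add hA hB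
      _ ≤ liminf (fun i => ((d i : ℝ) : EReal) + intG (volume.restrict Ω) g (fun x => (u i) x)) atTop :=
          EReal.le_liminf_add
      _ = liminf (fun i => energy (volume.restrict Ω) S (z i) g (u i)) atTop := by
          simp only [energy, hddef]
  · -- (ii) recovery sequences
    intro l
    refine ⟨fun _ => l, fun w => tendsto_const_nhds, ?_⟩
    by_cases hG : intG (volume.restrict Ω) g (fun x => l x) = ⊤
    · have h1 : energy (volume.restrict Ω) S zbar g l = ⊤ := by
        simp only [energy]
        rw [hG]
        exact EReal.add_top_of_ne_bot (EReal.coe_ne_bot _)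
      rw [h1]; exact le_top
    · have hGbot : intG (volume.restrict Ω) g (fun x => l x) ≠ ⊥ := intG_ne_bot (volume.restrict Ω) g _
      set G' : ℝ := (intG (volume.restrict Ω) g (fun x => l x)).toReal with hG'def
      have hGeq : intG (volume.restrict Ω) g (fun x => l x) = ((G' : ℝ) : EReal) :=
        (EReal.coe_toReal hG hGbot).symm
      have hnorm : Tendsto (fun i => (1/2 : ℝ) * ‖S l - z i‖^2 + G') atTop
          (𝓝 ((1/2 : ℝ) * ‖S l - zbar‖^2 + G')) := by
        have h1 : Tendsto (fun i => S l - z i) atTop (𝓝 (S l - zbar)) :=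
          tendsto_const_nhds.sub hzt
        exact (((h1.norm).pow 2).const_mul _).add tendsto_const_nhds
      have h2 : Tendsto (fun i => energy (volume.restrict Ω) S (z i) g l) atTop (𝓝 (energy (volume.restrict Ω) S zbar g l)) := by
        have h3 : ∀ (y : Y), energy (volume.restrict Ω) S y g l
            = (((1/2 : ℝ) * ‖S l - y‖^2 + G' : ℝ) : EReal) := by
          intro y
          simp only [energy]
          rw [hGeq, ← EReal.coe_add]
        simp only [h3]
        exact EReal.tendsto_coe.mpr hnorm
      exact le_of_eq h2.limsup_eq
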